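/- Let J, K be 2×2 real matrices with K = [[κ₁, κ̄],[κ̄, κ₂]], κ₁,κ₂ > 0, satisfying the current symmetry J₂₁κ₁ − J₁₂κ₂ = (J₁₁−J₂₂)κ̄, with J₂₁ ≠ 0 and positive discriminant θ² + 4J₁₂J₂₁ > 0 where θ = J₁₁−J₂₂. Define δ as the signed square root of the discriminant, u₊ = (δ−θ)/(2J₂₁), u₋ = −u₊J₂₁/J₁₂ (interpreted via the quadratic relation J₂₁u₊² + θu₊ − J₁₂ = 0), z₊² = κ₁ + 2u₊κ̄ + u₊²κ₂, z₋² = u₋²κ₁ + 2u₋κ̄ + κ₂, v = 1 − u₊u₋, and R = [[1/z₊, u₊/z₊],[u₋/z₋, 1/z₋]]. Then R K Rᵀ = 𝟙 (the 2×2 identity matrix). -/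

import Mathlib

open Matrix

theorem stmt_5 (J11 J12 J21 J22 κ₁ κ₂ κb θ δ uP uM zP zM : ℝ)
    (hκ₁ : 0 < κ₁) (hκ₂ : 0 < κ₂)
    (hsym : J21 * κ₁ - J12 * κ₂ = (J11 - J22) * κb)
    (hJ21 : J21 ≠ 0) (hJ12 : J12 ≠ 0)
    (hθ : θ = J11 - J22)
    (hdisc : 0 < θ^2 + 4 * J12 * J21)
    (hδ : δ^2 = θ^2 + 4 * J12 * J21)
    (huP : uP = (δ - θ) / (2 * J21))
    (huM : uM = -(J21 / J12) * uP)
    (hzPpos : 0 < zP) (hzMpos : 0 < zM)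
    (hzP : zP^2 = κ₁ + 2 * uP * κb + uP^2 * κ₂)
    (hzM : zM^2 = uM^2 * κ₁ + 2 * uM * κb + κ₂) :
    !![1/zP, uP/zP; uM/zM, 1/zM] * !![κ₁, κb; κb, κ₂] *
      (!![1/zP, uP/zP; uM/zM, 1/zM])ᵀ = 1 := by
  have hzP0 : zP ≠ 0 := ne_of_gt hzPpos
  have hzM0 : zM ≠ 0 := ne_of_gt hzMpos
  have hu : 2 * J21 * uP = δ - θ := by
    field_simp at huP; linarith
  have key : J21 * uP^2 + θ * uP - J12 = 0 := by
    have h4 : (4 * J21) * (J21 * uP^2 + θ * uP - J12)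
        = (2 * J21 * uP + θ)^2 - δ^2 := by rw [hδ]; ring
    have h0 : (2 * J21 * uP + θ)^2 - δ^2 = 0 := by rw [hu]; ring
    rcases mul_eq_zero.mp (h4.trans h0) with h | h
    · exact absurd (by linarith : J21 = 0) hJ21
    · exact h
  have off : uM * κ₁ + (1 + uP * uM) * κb + uP * κ₂ = 0 := by
    have huM' : J12 * uM = -(J21 * uP) := by
      rw [huM]; field_simp
    have hθ' : J21 * κ₁ - J12 * κ₂ = θ * κb := by rw [hθ]; exact hsym
    have h : J12 * (uM * κ₁ + (1 + uP * uM) * κb + uP * κ₂) = 0 := by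
      have e : J12 * (uM * κ₁ + (1 + uP * uM) * κb + uP * κ₂)
          = (J12 * uM + J21 * uP) * κ₁ - uP * (J21 * κ₁ - J12 * κ₂ - θ * κb)
            + uP * (J12 * uM + J21 * uP) * κb
            - (J21 * uP^2 + θ * uP - J12) * κb := by ring
      rw [e, huM', key, hθ']; ring
    rcases mul_eq_zero.mp h with h | h
    · exact absurd h hJ12
    · exact h
  have ht : (!![1/zP, uP/zP; uM/zM, 1/zM])ᵀ = !![1/zP, uM/zM; uP/zP, 1/zM] := by
    ext i j; fin_cases i <;> fin_cases j <;> simp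
  rw [ht, Matrix.mul_fin_two, Matrix.mul_fin_two, Matrix.one_fin_two]
  ext i j; fin_cases i <;> fin_cases j <;> simp <;> field_simp
  · linear_combination -hzP
  · linear_combination off
  · linear_combination off
  · linear_combination -hzM
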